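/- Let L∈ℕ, M₀∈ℝ³ with ‖M₀‖≤1, and let {M_ℓ(θ)}_{ℓ=1}^{L} be the IR-bSSFP discrete Bloch dynamics with flip angles {α_ℓ}, phase shifts {φ_ℓ} and repetition times {TR_ℓ>0}. Then for every ℓ∈{1,…,L} there exists a constant C_ℓ>0, depending only on TR₁,…,TR_ℓ (and not on θ), such that the operator norm of the Fréchet derivative satisfies ‖M_ℓ′(θ)‖ ≤ C_ℓ for all θ∈(0,∞)²; i.e., ‖M_ℓ′(θ)h‖ ≤ C_ℓ‖h‖ for all h∈ℝ². -/

import Mathlib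

open Matrix

/-- The equilibrium magnetization `M_e = (0,0,1)`. -/
noncomputable def Me : Fin 3 → ℝ := ![0, 0, 1]

/-- `E₁(TR,θ) = diag(e^{−TR/T₂}, e^{−TR/T₂}, e^{−TR/T₁})`. -/
noncomputable def E1 (TR T1 T2 : ℝ) : Matrix (Fin 3) (Fin 3) ℝ :=
  Matrix.diagonal ![Real.exp (-TR / T2), Real.exp (-TR / T2), Real.exp (-TR / T1)]

/-- `E₂(TR,θ) = 1 − e^{−TR/T₁}`. -/
noncomputable def E2 (TR T1 : ℝ) : ℝ := 1 - Real.exp (-TR / T1)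

/-- The phase-shift rotation `R_φ`. -/
noncomputable def Rphi (φ : ℝ) : Matrix (Fin 3) (Fin 3) ℝ :=
  !![Real.cos φ, Real.sin φ, 0; -Real.sin φ, Real.cos φ, 0; 0, 0, 1]

/-- The flip-angle rotation `R_x(α)`. -/
noncomputable def Rx (α : ℝ) : Matrix (Fin 3) (Fin 3) ℝ :=
  !![1, 0, 0; 0, Real.cos α, Real.sin α; 0, -Real.sin α, Real.cos α]

/-- `R(α) := R_φ R_x(α) R_φᵀ`. -/
noncomputable def Rmat (φ α : ℝ) : Matrix (Fin 3) (Fin 3) ℝ := Rphi φ * Rx α * (Rphi φ)ᵀ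

/-- The IR-bSSFP discrete Bloch dynamics:
`M₀` given, `M_ℓ = E₁(TR_ℓ,θ) R(α_ℓ) M_{ℓ−1} + E₂(TR_ℓ,θ) M_e`. -/
noncomputable def Mseq (α φ TR : ℕ → ℝ) (T1 T2 : ℝ) (M0 : Fin 3 → ℝ) : ℕ → Fin 3 → ℝ
  | 0 => M0
  | ℓ + 1 =>
      (E1 (TR (ℓ + 1)) T1 T2 * Rmat (φ (ℓ + 1)) (α (ℓ + 1))) *ᵥ Mseq α φ TR T1 T2 M0 ℓ
        + E2 (TR (ℓ + 1)) T1 • Me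

/-- `U₁(ℓ) = diag(0, 0, (TR_ℓ/T₁²) e^{−TR_ℓ/T₁}) R(α_ℓ)`. -/
noncomputable def U1 (TRl φl αl T1 : ℝ) : Matrix (Fin 3) (Fin 3) ℝ :=
  Matrix.diagonal ![0, 0, TRl / T1 ^ 2 * Real.exp (-TRl / T1)] * Rmat φl αl

/-- `U₂(ℓ) = diag((TR_ℓ/T₂²) e^{−TR_ℓ/T₂}, (TR_ℓ/T₂²) e^{−TR_ℓ/T₂}, 0) R(α_ℓ)`. -/
noncomputable def U2 (TRl φl αl T2 : ℝ) : Matrix (Fin 3) (Fin 3) ℝ :=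
  Matrix.diagonal ![TRl / T2 ^ 2 * Real.exp (-TRl / T2),
    TRl / T2 ^ 2 * Real.exp (-TRl / T2), 0] * Rmat φl αl

/-- The recursion for `∂M_ℓ/∂T₁`:
`∂M_ℓ/∂T₁ = U₁(ℓ) M_{ℓ−1} + E₁(TR_ℓ)R(α_ℓ) ∂M_{ℓ−1}/∂T₁ − (TR_ℓ/T₁²)e^{−TR_ℓ/T₁} M_e`,
with `∂M₀/∂T₁ = 0`. -/
noncomputable def D1 (α φ TR : ℕ → ℝ) (T1 T2 : ℝ) (M0 : Fin 3 → ℝ) : ℕ → Fin 3 → ℝ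
  | 0 => 0
  | ℓ + 1 =>
      U1 (TR (ℓ + 1)) (φ (ℓ + 1)) (α (ℓ + 1)) T1 *ᵥ Mseq α φ TR T1 T2 M0 ℓ
        + (E1 (TR (ℓ + 1)) T1 T2 * Rmat (φ (ℓ + 1)) (α (ℓ + 1))) *ᵥ D1 α φ TR T1 T2 M0 ℓ
        - (TR (ℓ + 1) / T1 ^ 2 * Real.exp (-TR (ℓ + 1) / T1)) • Me

/-- The recursion for `∂M_ℓ/∂T₂`:
`∂M_ℓ/∂T₂ = U₂(ℓ) M_{ℓ−1} + E₁(TR_ℓ)R(α_ℓ) ∂M_{ℓ−1}/∂T₂`, with `∂M₀/∂T₂ = 0`. -/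
noncomputable def D2 (α φ TR : ℕ → ℝ) (T1 T2 : ℝ) (M0 : Fin 3 → ℝ) : ℕ → Fin 3 → ℝ
  | 0 => 0
  | ℓ + 1 =>
      U2 (TR (ℓ + 1)) (φ (ℓ + 1)) (α (ℓ + 1)) T2 *ᵥ Mseq α φ TR T1 T2 M0 ℓ
        + (E1 (TR (ℓ + 1)) T1 T2 * Rmat (φ (ℓ + 1)) (α (ℓ + 1))) *ᵥ D2 α φ TR T1 T2 M0 ℓ


/-- The Euclidean norm on `ℝ³`. -/
noncomputable def enorm3 (v : Fin 3 → ℝ) : ℝ := Real.sqrt (∑ i, v i ^ 2)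

/-- The Euclidean norm on `ℝ²`. -/
noncomputable def enorm2 (v : ℝ × ℝ) : ℝ := Real.sqrt (v.1 ^ 2 + v.2 ^ 2)

section Aux

lemma enorm3_eq (v : Fin 3 → ℝ) : enorm3 v = ‖(WithLp.equiv 2 (Fin 3 → ℝ)).symm v‖ := by
  rw [EuclideanSpace.norm_eq]
  simp [enorm3, sq_abs]

lemma enorm3_nonneg (v : Fin 3 → ℝ) : 0 ≤ enorm3 v := Real.sqrt_nonneg _

lemma enorm3_add_le (a b : Fin 3 → ℝ) : enorm3 (a + b) ≤ enorm3 a + enorm3 b := by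
  simp only [enorm3_eq]
  rw [show (WithLp.equiv 2 (Fin 3 → ℝ)).symm (a+b) = (WithLp.equiv 2 (Fin 3 → ℝ)).symm a
    + (WithLp.equiv 2 (Fin 3 → ℝ)).symm b from rfl]
  exact norm_add_le _ _

lemma enorm3_sub_le (a b : Fin 3 → ℝ) : enorm3 (a - b) ≤ enorm3 a + enorm3 b := by
  simp only [enorm3_eq]
  rw [show (WithLp.equiv 2 (Fin 3 → ℝ)).symm (a-b) = (WithLp.equiv 2 (Fin 3 → ℝ)).symm a
    - (WithLp.equiv 2 (Fin 3 → ℝ)).symm b from rfl]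
  exact norm_sub_le _ _

lemma enorm3_smul (c : ℝ) (v : Fin 3 → ℝ) : enorm3 (c • v) = |c| * enorm3 v := by
  simp only [enorm3_eq]
  rw [show (WithLp.equiv 2 (Fin 3 → ℝ)).symm (c • v)
    = c • (WithLp.equiv 2 (Fin 3 → ℝ)).symm v from rfl]
  simp [norm_smul]

lemma enorm3_zero : enorm3 (0 : Fin 3 → ℝ) = 0 := by simp [enorm3]

lemma enorm3_Me : enorm3 Me = 1 := by
  simp [enorm3, Me, Fin.sum_univ_three]

lemma sum_sq_Rphi (φ : ℝ) (v : Fin 3 → ℝ) :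
    ∑ i, (Rphi φ *ᵥ v) i ^ 2 = ∑ i, v i ^ 2 := by
  simp [Rphi, Matrix.mulVec, dotProduct, Fin.sum_univ_three, Matrix.vecHead,
    Matrix.vecTail]
  nlinarith [Real.sin_sq_add_cos_sq φ]

lemma sum_sq_RphiT (φ : ℝ) (v : Fin 3 → ℝ) :
    ∑ i, ((Rphi φ)ᵀ *ᵥ v) i ^ 2 = ∑ i, v i ^ 2 := by
  simp [Rphi, Matrix.mulVec, dotProduct, Fin.sum_univ_three, Matrix.vecHead,
    Matrix.vecTail, Matrix.transpose]
  nlinarith [Real.sin_sq_add_cos_sq φ]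

lemma sum_sq_Rx (α : ℝ) (v : Fin 3 → ℝ) :
    ∑ i, (Rx α *ᵥ v) i ^ 2 = ∑ i, v i ^ 2 := by
  simp [Rx, Matrix.mulVec, dotProduct, Fin.sum_univ_three, Matrix.vecHead,
    Matrix.vecTail]
  nlinarith [Real.sin_sq_add_cos_sq α]

lemma enorm3_Rmat (φ α : ℝ) (v : Fin 3 → ℝ) : enorm3 (Rmat φ α *ᵥ v) = enorm3 v := by
  unfold Rmat enorm3
  rw [← Matrix.mulVec_mulVec, ← Matrix.mulVec_mulVec, sum_sq_Rphi, sum_sq_Rx, sum_sq_RphiT]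

lemma exp_le_one_of_pos {TR T : ℝ} (hTR : 0 < TR) (hT : 0 < T) :
    Real.exp (-TR / T) ≤ 1 := by
  apply Real.exp_le_one_iff.mpr
  have : 0 < TR / T := div_pos hTR hT
  rw [neg_div]; linarith

lemma enorm3_E1_le {TR T1 T2 : ℝ} (hTR : 0 < TR) (h1 : 0 < T1) (h2 : 0 < T2)
    (v : Fin 3 → ℝ) : enorm3 (E1 TR T1 T2 *ᵥ v) ≤ enorm3 v := by
  have ha : Real.exp (-TR / T2) ≤ 1 := exp_le_one_of_pos hTR h2
  have hb : Real.exp (-TR / T1) ≤ 1 := exp_le_one_of_pos hTR h1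
  have ha0 := Real.exp_pos (-TR / T2)
  have hb0 := Real.exp_pos (-TR / T1)
  unfold enorm3
  apply Real.sqrt_le_sqrt
  simp [E1, Matrix.mulVec, dotProduct, Matrix.diagonal, Fin.sum_univ_three,
    Matrix.vecHead, Matrix.vecTail]
  have ha2 : Real.exp (-TR / T2) ^ 2 ≤ 1 := by nlinarith
  have hb2 : Real.exp (-TR / T1) ^ 2 ≤ 1 := by nlinarith
  nlinarith [mul_le_of_le_one_left (sq_nonneg (v 0)) ha2,
    mul_le_of_le_one_left (sq_nonneg (v 1)) ha2,
    mul_le_of_le_one_left (sq_nonneg (v 2)) hb2]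

lemma enorm3_diag1_le (s : ℝ) (v : Fin 3 → ℝ) :
    enorm3 (Matrix.diagonal ![0, 0, s] *ᵥ v) ≤ |s| * enorm3 v := by
  unfold enorm3
  rw [← Real.sqrt_sq_eq_abs, ← Real.sqrt_mul (sq_nonneg s)]
  apply Real.sqrt_le_sqrt
  simp [Matrix.mulVec, dotProduct, Matrix.diagonal, Fin.sum_univ_three,
    Matrix.vecHead, Matrix.vecTail]
  nlinarith [sq_nonneg (v 0), sq_nonneg (v 1), sq_nonneg s]

lemma enorm3_diag2_le (s : ℝ) (v : Fin 3 → ℝ) :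
    enorm3 (Matrix.diagonal ![s, s, 0] *ᵥ v) ≤ |s| * enorm3 v := by
  unfold enorm3
  rw [← Real.sqrt_sq_eq_abs, ← Real.sqrt_mul (sq_nonneg s)]
  apply Real.sqrt_le_sqrt
  simp [Matrix.mulVec, dotProduct, Matrix.diagonal, Fin.sum_univ_three,
    Matrix.vecHead, Matrix.vecTail]
  nlinarith [sq_nonneg (v 2), sq_nonneg s]

lemma scalar_bound {TR T : ℝ} (hTR : 0 < TR) (hT : 0 < T) :
    TR / T ^ 2 * Real.exp (-TR / T) ≤ 4 / TR := by
  set x := TR / T with hxdef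
  have hx : 0 < x := div_pos hTR hT
  have h1 : x / 2 + 1 ≤ Real.exp (x / 2) := Real.add_one_le_exp _
  have h2 : Real.exp x = Real.exp (x / 2) * Real.exp (x / 2) := by
    rw [← Real.exp_add]; ring_nf
  have hx2 : x ^ 2 ≤ 4 * Real.exp x := by nlinarith [Real.exp_pos (x/2)]
  have hne : -TR / T = -x := by rw [hxdef]; ring
  have hT2 : TR / T ^ 2 = x ^ 2 / TR := by rw [hxdef]; field_simp
  rw [hne, Real.exp_neg, hT2, ← sub_nonneg]
  have hep := Real.exp_pos x
  have : 4 / TR - x ^ 2 / TR * (Real.exp x)⁻¹ =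
      (4 * Real.exp x - x ^ 2) / (TR * Real.exp x) := by
    field_simp
  rw [this]
  exact div_nonneg (by linarith) (by positivity)

lemma mseq_le (α φ TR : ℕ → ℝ) (hTR : ∀ ℓ, 0 < TR ℓ) (T1 T2 : ℝ)
    (h1 : 0 < T1) (h2 : 0 < T2) (M0 : Fin 3 → ℝ) (hM0 : enorm3 M0 ≤ 1) :
    ∀ ℓ, enorm3 (Mseq α φ TR T1 T2 M0 ℓ) ≤ 1 + ℓ := by
  intro ℓ
  induction ℓ with
  | zero => simpa [Mseq] using hM0
  | succ n ih =>
      have hstep : Mseq α φ TR T1 T2 M0 (n + 1)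
          = (E1 (TR (n + 1)) T1 T2 * Rmat (φ (n + 1)) (α (n + 1))) *ᵥ
              Mseq α φ TR T1 T2 M0 n + E2 (TR (n + 1)) T1 • Me := rfl
      rw [hstep]
      have t1 : enorm3 ((E1 (TR (n + 1)) T1 T2 * Rmat (φ (n + 1)) (α (n + 1))) *ᵥ
          Mseq α φ TR T1 T2 M0 n) ≤ 1 + n := by
        rw [← Matrix.mulVec_mulVec]
        calc enorm3 (E1 (TR (n + 1)) T1 T2 *ᵥ
              (Rmat (φ (n + 1)) (α (n + 1)) *ᵥ Mseq α φ TR T1 T2 M0 n))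
            ≤ enorm3 (Rmat (φ (n + 1)) (α (n + 1)) *ᵥ Mseq α φ TR T1 T2 M0 n) :=
              enorm3_E1_le (hTR _) h1 h2 _
          _ = enorm3 (Mseq α φ TR T1 T2 M0 n) := enorm3_Rmat _ _ _
          _ ≤ 1 + n := ih
      have t2 : enorm3 (E2 (TR (n + 1)) T1 • Me) ≤ 1 := by
        rw [enorm3_smul, enorm3_Me, mul_one]
        have he := exp_le_one_of_pos (hTR (n + 1)) h1
        have he0 := Real.exp_pos (-TR (n + 1) / T1)
        rw [abs_le]
        constructor <;> [unfold E2; unfold E2] <;> nlinarith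
      calc enorm3 _ ≤ _ + _ := enorm3_add_le _ _
        _ ≤ (1 + n) + 1 := add_le_add t1 t2
        _ = 1 + (n + 1 : ℕ) := by push_cast; ring

lemma D_le (TR : ℕ → ℝ) (hTR : ∀ ℓ, 0 < TR ℓ) :
    ∀ ℓ : ℕ, ∃ C > 0, ∀ (α φ : ℕ → ℝ) (M0 : Fin 3 → ℝ), enorm3 M0 ≤ 1 →
      ∀ T1 T2 : ℝ, 0 < T1 → 0 < T2 →
        enorm3 (D1 α φ TR T1 T2 M0 ℓ) ≤ C ∧ enorm3 (D2 α φ TR T1 T2 M0 ℓ) ≤ C := by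
  intro ℓ
  induction ℓ with
  | zero =>
      exact ⟨1, one_pos, fun α φ M0 _ T1 T2 _ _ => by
        constructor <;> (show enorm3 (0 : Fin 3 → ℝ) ≤ 1) <;> rw [enorm3_zero] <;> norm_num⟩
  | succ n ih =>
      obtain ⟨C, hC, hrec⟩ := ih
      have htr := hTR (n + 1)
      have h4 : (0:ℝ) < 4 / TR (n + 1) := div_pos (by norm_num) htr
      have h1n : (0:ℝ) < 1 + n := by positivity
      refine ⟨4 / TR (n + 1) * (1 + n) + C + 4 / TR (n + 1),
        by nlinarith [mul_pos h4 h1n], ?_⟩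
      intro α φ M0 hM0 T1 T2 h1 h2
      obtain ⟨hd1, hd2⟩ := hrec α φ M0 hM0 T1 T2 h1 h2
      have hm := mseq_le α φ TR hTR T1 T2 h1 h2 M0 hM0 n
      have hEterm : ∀ w : Fin 3 → ℝ, enorm3 w ≤ C →
          enorm3 ((E1 (TR (n + 1)) T1 T2 * Rmat (φ (n + 1)) (α (n + 1))) *ᵥ w) ≤ C := by
        intro w hw
        rw [← Matrix.mulVec_mulVec]
        calc enorm3 (E1 (TR (n + 1)) T1 T2 *ᵥ (Rmat (φ (n + 1)) (α (n + 1)) *ᵥ w))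
            ≤ enorm3 (Rmat (φ (n + 1)) (α (n + 1)) *ᵥ w) := enorm3_E1_le (hTR _) h1 h2 _
          _ = enorm3 w := enorm3_Rmat _ _ _
          _ ≤ C := hw
      have hs1 : |TR (n + 1) / T1 ^ 2 * Real.exp (-TR (n + 1) / T1)| ≤ 4 / TR (n + 1) := by
        rw [abs_of_nonneg (le_of_lt (mul_pos (div_pos htr (pow_pos h1 2)) (Real.exp_pos _)))]
        exact scalar_bound (hTR _) h1
      have hs2 : |TR (n + 1) / T2 ^ 2 * Real.exp (-TR (n + 1) / T2)| ≤ 4 / TR (n + 1) := by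
        rw [abs_of_nonneg (le_of_lt (mul_pos (div_pos htr (pow_pos h2 2)) (Real.exp_pos _)))]
        exact scalar_bound (hTR _) h2
      have hU1 : enorm3 (U1 (TR (n + 1)) (φ (n + 1)) (α (n + 1)) T1 *ᵥ
          Mseq α φ TR T1 T2 M0 n) ≤ 4 / TR (n + 1) * (1 + n) := by
        unfold U1
        rw [← Matrix.mulVec_mulVec]
        calc enorm3 _ ≤ |TR (n + 1) / T1 ^ 2 * Real.exp (-TR (n + 1) / T1)| *
              enorm3 (Rmat (φ (n + 1)) (α (n + 1)) *ᵥ Mseq α φ TR T1 T2 M0 n) :=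
              enorm3_diag1_le _ _
          _ = |TR (n + 1) / T1 ^ 2 * Real.exp (-TR (n + 1) / T1)| *
              enorm3 (Mseq α φ TR T1 T2 M0 n) := by rw [enorm3_Rmat]
          _ ≤ 4 / TR (n + 1) * (1 + n) :=
              mul_le_mul hs1 hm (enorm3_nonneg _) h4.le
      have hU2 : enorm3 (U2 (TR (n + 1)) (φ (n + 1)) (α (n + 1)) T2 *ᵥ
          Mseq α φ TR T1 T2 M0 n) ≤ 4 / TR (n + 1) * (1 + n) := by
        unfold U2
        rw [← Matrix.mulVec_mulVec]
        calc enorm3 _ ≤ |TR (n + 1) / T2 ^ 2 * Real.exp (-TR (n + 1) / T2)| *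
              enorm3 (Rmat (φ (n + 1)) (α (n + 1)) *ᵥ Mseq α φ TR T1 T2 M0 n) :=
              enorm3_diag2_le _ _
          _ = |TR (n + 1) / T2 ^ 2 * Real.exp (-TR (n + 1) / T2)| *
              enorm3 (Mseq α φ TR T1 T2 M0 n) := by rw [enorm3_Rmat]
          _ ≤ 4 / TR (n + 1) * (1 + n) :=
              mul_le_mul hs2 hm (enorm3_nonneg _) h4.le
      constructor
      · have hstep : D1 α φ TR T1 T2 M0 (n + 1)
            = U1 (TR (n + 1)) (φ (n + 1)) (α (n + 1)) T1 *ᵥ Mseq α φ TR T1 T2 M0 n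
              + (E1 (TR (n + 1)) T1 T2 * Rmat (φ (n + 1)) (α (n + 1))) *ᵥ
                  D1 α φ TR T1 T2 M0 n
              - (TR (n + 1) / T1 ^ 2 * Real.exp (-TR (n + 1) / T1)) • Me := rfl
        rw [hstep]
        have hMe : enorm3 ((TR (n + 1) / T1 ^ 2 * Real.exp (-TR (n + 1) / T1)) • Me)
            ≤ 4 / TR (n + 1) := by
          rw [enorm3_smul, enorm3_Me, mul_one]; exact hs1
        calc enorm3 _ ≤ enorm3 _ + enorm3 _ := enorm3_sub_le _ _
          _ ≤ (enorm3 _ + enorm3 _) + enorm3 _ :=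
              add_le_add (enorm3_add_le _ _) le_rfl
          _ ≤ (4 / TR (n + 1) * (1 + n) + C) + 4 / TR (n + 1) :=
              add_le_add (add_le_add hU1 (hEterm _ hd1)) hMe
          _ = 4 / TR (n + 1) * (1 + n) + C + 4 / TR (n + 1) := by ring
      · have hstep : D2 α φ TR T1 T2 M0 (n + 1)
            = U2 (TR (n + 1)) (φ (n + 1)) (α (n + 1)) T2 *ᵥ Mseq α φ TR T1 T2 M0 n
              + (E1 (TR (n + 1)) T1 T2 * Rmat (φ (n + 1)) (α (n + 1))) *ᵥ
                  D2 α φ TR T1 T2 M0 n := rfl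
        rw [hstep]
        calc enorm3 _ ≤ enorm3 _ + enorm3 _ := enorm3_add_le _ _
          _ ≤ 4 / TR (n + 1) * (1 + n) + C := add_le_add hU2 (hEterm _ hd2)
          _ ≤ 4 / TR (n + 1) * (1 + n) + C + 4 / TR (n + 1) := by linarith

end Aux

/-- Uniform bound on the operator norm of the Fréchet derivative of the IR-bSSFP map
`θ ↦ M_ℓ(θ)` (whose action is `M_ℓ′(θ)h = h₁ ∂M_ℓ/∂T₁ + h₂ ∂M_ℓ/∂T₂`): for `‖M₀‖ ≤ 1`
there is `C_ℓ > 0`, depending only on `TR₁,…,TR_ℓ` (not on `θ`), with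
`‖M_ℓ′(θ)h‖ ≤ C_ℓ ‖h‖` for all `θ ∈ (0,∞)²` and all `h ∈ ℝ²`. -/
theorem stmt8 (TR : ℕ → ℝ) (hTR : ∀ ℓ, 0 < TR ℓ) (L : ℕ)
    (ℓ : ℕ) (hℓ1 : 1 ≤ ℓ) (hℓL : ℓ ≤ L) :
    ∃ C > 0, ∀ (α φ : ℕ → ℝ) (M0 : Fin 3 → ℝ), enorm3 M0 ≤ 1 →
      ∀ T1 T2 : ℝ, 0 < T1 → 0 < T2 → ∀ h : ℝ × ℝ,
        enorm3 (h.1 • D1 α φ TR T1 T2 M0 ℓ + h.2 • D2 α φ TR T1 T2 M0 ℓ)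
          ≤ C * enorm2 h := by
  obtain ⟨C, hC, hB⟩ := D_le TR hTR ℓ
  refine ⟨C + C, by linarith, ?_⟩
  intro α φ M0 hM0 T1 T2 h1 h2 h
  obtain ⟨hd1, hd2⟩ := hB α φ M0 hM0 T1 T2 h1 h2
  have habs1 : |h.1| ≤ enorm2 h := by
    rw [← Real.sqrt_sq_eq_abs]
    exact Real.sqrt_le_sqrt (by nlinarith [sq_nonneg h.2])
  have habs2 : |h.2| ≤ enorm2 h := by
    rw [← Real.sqrt_sq_eq_abs]
    exact Real.sqrt_le_sqrt (by nlinarith [sq_nonneg h.1])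
  calc enorm3 (h.1 • D1 α φ TR T1 T2 M0 ℓ + h.2 • D2 α φ TR T1 T2 M0 ℓ)
      ≤ enorm3 (h.1 • D1 α φ TR T1 T2 M0 ℓ) + enorm3 (h.2 • D2 α φ TR T1 T2 M0 ℓ) :=
        enorm3_add_le _ _
    _ = |h.1| * enorm3 (D1 α φ TR T1 T2 M0 ℓ) + |h.2| * enorm3 (D2 α φ TR T1 T2 M0 ℓ) := by
        rw [enorm3_smul, enorm3_smul]
    _ ≤ enorm2 h * C + enorm2 h * C :=
        add_le_add
          (mul_le_mul habs1 hd1 (enorm3_nonneg _) (Real.sqrt_nonneg _))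
          (mul_le_mul habs2 hd2 (enorm3_nonneg _) (Real.sqrt_nonneg _))
    _ = (C + C) * enorm2 h := by ring
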